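/- For n ≥ 1 and pairwise distinct p, z_1, ..., z_N with n < N, the identity Δ^{-1} ∑_{i=1}^N (1/(p - z_i)) ∂^n Δ/∂z_i^n = (1/(n+1)) (∂/∂p + ∑_{i=1}^N 1/(p - z_i))^{n+1} · 1 holds, where the right side means the operator applied to the constant function 1 in the variable p. -/

import Mathlib

section PolyHelpers

open Polynomial Finset

lemma iterD_add (k : ℕ) (p q : ℝ[X]) :
    derivative^[k] (p + q) = derivative^[k] p + derivative^[k] q := by
  induction k generalizing p q with
  | zero => simp
  | succ k ih => simp [Function.iterate_succ_apply, derivative_add, ih]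

lemma polyDerivProd {ι : Type*} [DecidableEq ι] (s : Finset ι) (f : ι → ℝ[X]) :
    derivative (∏ j ∈ s, f j) = ∑ i ∈ s, (∏ j ∈ s.erase i, f j) * derivative (f i) := by
  induction s using Finset.induction_on with
  | empty => simp
  | insert a s ha ih =>
    rw [Finset.prod_insert ha, derivative_mul, ih, Finset.sum_insert ha,
      Finset.erase_insert ha, Finset.mul_sum]
    congr 1
    · ring
    · refine Finset.sum_congr rfl fun i hi => ?_
      rw [Finset.erase_insert_of_ne (by rintro rfl; exact ha hi), Finset.prod_insert
        (fun h => ha (Finset.mem_of_mem_erase h))]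
      ring

lemma iter_deriv_linear_mul (a : ℝ) (s : ℕ) (g : ℝ[X]) :
    derivative^[s+1] ((X - C a) * g) =
      (X - C a) * derivative^[s+1] g + ((s : ℝ[X]) + 1) * derivative^[s] g := by
  induction s generalizing g with
  | zero => simp [derivative_mul]; ring
  | succ s ih =>
    rw [Function.iterate_succ_apply, derivative_mul]
    simp only [derivative_sub, derivative_X, derivative_C, sub_zero, one_mul]
    rw [iterD_add, ih]
    rw [show derivative^[s+1] g = derivative^[s] (derivative g) from
        Function.iterate_succ_apply _ _ _,
      show derivative^[s+1+1] g = derivative^[s+1] (derivative g) from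
        Function.iterate_succ_apply _ _ _]
    push_cast
    ring

variable {N : ℕ} (z : Fin N → ℝ)

noncomputable def Wz : ℝ[X] := ∏ i : Fin N, (X - C (z i))
noncomputable def gz (i : Fin N) : ℝ[X] := ∏ j ∈ Finset.univ.erase i, (X - C (z j))

lemma Wz_factor (i : Fin N) : Wz z = (X - C (z i)) * gz z i :=
  (Finset.mul_prod_erase _ _ (Finset.mem_univ i)).symm

lemma evalW_ne {q : ℝ} (hq : ∀ i, q ≠ z i) : (Wz z).eval q ≠ 0 := by
  rw [Wz, eval_prod]
  exact Finset.prod_ne_zero_iff.mpr fun i _ => by simpa using sub_ne_zero.mpr (hq i)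

lemma f_mul_W {q : ℝ} (hq : ∀ i, q ≠ z i) :
    (∑ i : Fin N, 1 / (q - z i)) * (Wz z).eval q = (derivative (Wz z)).eval q := by
  rw [Wz, polyDerivProd, eval_finset_sum, Finset.sum_mul]
  refine Finset.sum_congr rfl fun i _ => ?_
  simp only [derivative_sub, derivative_X, derivative_C, sub_zero, eval_mul, eval_one, mul_one,
    eval_prod, eval_sub, eval_X, eval_C]
  rw [← Finset.prod_erase_mul _ _ (Finset.mem_univ i)]
  field_simp [sub_ne_zero.mpr (hq i)]

lemma partial_fractions (hz : Function.Injective z) (P : ℝ[X])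
    (hP : P.degree < (N : WithBot ℕ)) {p : ℝ} (hp : ∀ i, p ≠ z i) :
    P.eval p / (Wz z).eval p
      = ∑ i : Fin N, P.eval (z i) / (gz z i).eval (z i) * (1 / (p - z i)) := by
  classical
  have hvs : Set.InjOn z ↑(Finset.univ : Finset (Fin N)) := Function.Injective.injOn hz
  have hcard : (#(Finset.univ : Finset (Fin N)) : WithBot ℕ) = (N : WithBot ℕ) := by
    simp
  have h0 : P = Lagrange.interpolate Finset.univ z (fun i => P.eval (z i)) :=
    Lagrange.eq_interpolate hvs (by rw [hcard]; exact hP)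
  have hep : P.eval p = ∑ i : Fin N, P.eval (z i) *
      ∏ j ∈ Finset.univ.erase i, ((z i - z j)⁻¹ * (p - z j)) := by
    conv_lhs => rw [h0]
    rw [Lagrange.interpolate_apply, eval_finset_sum]
    refine Finset.sum_congr rfl fun i _ => ?_
    rw [eval_mul, eval_C, Lagrange.basis, eval_prod]
    congr 1
    refine Finset.prod_congr rfl fun j _ => ?_
    rw [Lagrange.basisDivisor, eval_mul, eval_C, eval_sub, eval_X, eval_C]
  rw [hep, Finset.sum_div]
  refine Finset.sum_congr rfl fun i _ => ?_
  have hQ : ∀ j ∈ Finset.univ.erase i, p - z j ≠ 0 := fun j _ => sub_ne_zero.mpr (hp j)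
  have hQne : (∏ j ∈ Finset.univ.erase i, (p - z j)) ≠ 0 := Finset.prod_ne_zero_iff.mpr hQ
  have hgne : (∏ j ∈ Finset.univ.erase i, (z i - z j)) ≠ 0 :=
    Finset.prod_ne_zero_iff.mpr fun j hj => sub_ne_zero.mpr
      (fun h => (Finset.mem_erase.mp hj).1 (hz h.symm))
  have hpi : p - z i ≠ 0 := sub_ne_zero.mpr (hp i)
  have hWe : (Wz z).eval p = (p - z i) * ∏ j ∈ Finset.univ.erase i, (p - z j) := by
    rw [Wz_factor z i, eval_mul, eval_sub, eval_X, eval_C, gz, eval_prod]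
    simp
  have hge : (gz z i).eval (z i) = ∏ j ∈ Finset.univ.erase i, (z i - z j) := by
    rw [gz, eval_prod]; simp
  rw [hWe, hge, Finset.prod_mul_distrib, Finset.prod_inv_distrib]
  field_simp

lemma natDegree_Wz : (Wz z).natDegree = N := by
  rw [Wz, Polynomial.natDegree_prod _ _ (fun i _ => X_sub_C_ne_zero (z i))]
  simp [Polynomial.natDegree_X_sub_C]

lemma prod_eq_ite_erase {ι : Type*} [DecidableEq ι] (s : Finset ι) (f : ι → ℝ[X]) (i : ι) :
    ∏ b ∈ s, f b = (if i ∈ s then f i else 1) * ∏ b ∈ s.erase i, f b := by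
  by_cases h : i ∈ s
  · rw [if_pos h, Finset.mul_prod_erase _ _ h]
  · rw [if_neg h, Finset.erase_eq_of_notMem h, one_mul]

end PolyHelpers

open MvPolynomial

/-- The Vandermonde determinant as a multivariate polynomial in z_1,...,z_N. -/
noncomputable def vandPoly (N : ℕ) : MvPolynomial (Fin N) ℝ :=
  ∏ i : Fin N, ∏ j ∈ Finset.univ.filter (fun j => i < j), (X i - X j)

/-- `Qiter f s p` is `(∂/∂p + f(p))^s · 1` : iterated application of
(derivative + multiplication by `f`) to the constant function 1, evaluated at `p`. -/
noncomputable def Qiter (f : ℝ → ℝ) : ℕ → ℝ → ℝ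
  | 0 => fun _ => 1
  | s + 1 => fun p => deriv (Qiter f s) p + f p * Qiter f s p

section Bridge

variable {N : ℕ} (z : Fin N → ℝ) (i : Fin N)

lemma qiter_eq (s : ℕ) {q : ℝ} (hq : ∀ i, q ≠ z i) :
    Qiter (fun x => ∑ i : Fin N, 1 / (x - z i)) s q
      = (Polynomial.derivative^[s] (Wz z)).eval q / (Wz z).eval q := by
  induction s generalizing q with
  | zero => simp [Qiter, div_self (evalW_ne z hq)]
  | succ s ih =>
    have hU : IsOpen {x : ℝ | ∀ i, x ≠ z i} := by
      have : {x : ℝ | ∀ i, x ≠ z i} = (Set.range z)ᶜ := by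
        ext x; simp [Set.mem_range, eq_comm]
      rw [this]
      exact (Set.finite_range z).isClosed.isOpen_compl
    have hmem : {x : ℝ | ∀ i, x ≠ z i} ∈ nhds q := hU.mem_nhds hq
    have heq : (fun x => Qiter (fun y => ∑ i : Fin N, 1 / (y - z i)) s x)
        =ᶠ[nhds q] fun x => (Polynomial.derivative^[s] (Wz z)).eval x / (Wz z).eval x :=
      Filter.eventually_of_mem hmem fun x hx => ih hx
    have hW := evalW_ne z hq
    have hd : deriv (Qiter (fun y => ∑ i : Fin N, 1 / (y - z i)) s) q
        = ((Polynomial.derivative^[s+1] (Wz z)).eval q * (Wz z).eval q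
            - (Polynomial.derivative^[s] (Wz z)).eval q
              * (Polynomial.derivative (Wz z)).eval q)
              / ((Wz z).eval q)^2 := by
      rw [heq.deriv_eq]
      have := ((Polynomial.hasDerivAt (Polynomial.derivative^[s] (Wz z)) q).div
        (Polynomial.hasDerivAt (Wz z) q) hW).deriv
      rw [Function.iterate_succ_apply']
      exact this
    simp only [Qiter]
    rw [hd, ih hq, ← f_mul_W z hq]
    field_simp
    ring

noncomputable def psi : MvPolynomial (Fin N) ℝ →ₐ[ℝ] Polynomial ℝ :=
  MvPolynomial.aeval (fun j => if j = i then (Polynomial.X : Polynomial ℝ)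
    else Polynomial.C (z j))

lemma psi_X (j : Fin N) : psi z i (X j)
    = if j = i then (Polynomial.X : Polynomial ℝ) else Polynomial.C (z j) := by
  simp [psi]

lemma psi_pderiv (P : MvPolynomial (Fin N) ℝ) :
    psi z i (pderiv i P) = Polynomial.derivative (psi z i P) := by
  induction P using MvPolynomial.induction_on with
  | C a => simp [psi]
  | add p q hp hq => simp only [map_add, hp, hq, Polynomial.derivative_add]
  | mul_X p j hp =>
    rw [pderiv_mul, map_add, map_mul, map_mul, hp, pderiv_X,
      map_mul, Polynomial.derivative_mul, psi_X]
    by_cases h : j = i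
    · subst h; simp [Pi.single_eq_same, psi]
    · simp [Pi.single_eq_of_ne (fun hh => h hh.symm), psi_X, h]

lemma psi_pderiv_iter (k : ℕ) (P : MvPolynomial (Fin N) ℝ) :
    psi z i ((pderiv i)^[k] P) = Polynomial.derivative^[k] (psi z i P) := by
  induction k generalizing P with
  | zero => rfl
  | succ k ih =>
    rw [Function.iterate_succ_apply, Function.iterate_succ_apply, ih, psi_pderiv]

lemma psi_eval (P : MvPolynomial (Fin N) ℝ) :
    (psi z i P).eval (z i) = eval z P := by
  induction P using MvPolynomial.induction_on with
  | C a => simp [psi]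
  | add p q hp hq => simp [map_add, hp, hq]
  | mul_X p j hp =>
    rw [map_mul, Polynomial.eval_mul, hp, psi_X, map_mul, eval_X]
    by_cases h : j = i
    · subst h; simp
    · simp [h]

lemma psi_vand : ∃ c : ℝ, psi z i (vandPoly N)
    = Polynomial.C c * gz z i := by
  classical
  set e : Fin N → Polynomial ℝ := fun j => if j = i then (Polynomial.X : Polynomial ℝ)
    else Polynomial.C (z j) with he
  have hpsi : psi z i (vandPoly N)
      = ∏ a : Fin N, ∏ b ∈ Finset.univ.filter (fun j => a < j), (e a - e b) := by
    rw [vandPoly, map_prod]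
    exact Finset.prod_congr rfl fun a _ => by
      rw [map_prod]; exact Finset.prod_congr rfl fun b _ => by rw [map_sub, psi_X, psi_X]
  rw [hpsi, ← Finset.mul_prod_erase _ _ (Finset.mem_univ i), gz]
  have h1 : ∏ b ∈ Finset.univ.filter (fun j => i < j), (e i - e b)
      = ∏ b ∈ Finset.univ.filter (fun j => i < j), (Polynomial.X - Polynomial.C (z b)) := by
    refine Finset.prod_congr rfl fun b hb => ?_
    have hbi : b ≠ i := by rintro rfl; exact lt_irrefl b (Finset.mem_filter.mp hb).2
    simp [he, hbi]
  have h2 : ∀ a ∈ Finset.univ.erase i,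
      ∏ b ∈ Finset.univ.filter (fun j => a < j), (e a - e b)
      = (if a < i then (Polynomial.C (z a) - Polynomial.X) else 1) *
        Polynomial.C (∏ b ∈ (Finset.univ.filter (fun j => a < j)).erase i, (z a - z b)) := by
    intro a ha
    have hai : a ≠ i := (Finset.mem_erase.mp ha).1
    rw [prod_eq_ite_erase _ _ i, map_prod]
    congr 1
    · by_cases h : a < i
      · rw [if_pos (by simp [h]), if_pos h]; simp [he, hai]
      · rw [if_neg (by simp [h]), if_neg h]
    · refine Finset.prod_congr rfl fun b hb => ?_
      have hbi : b ≠ i := (Finset.mem_erase.mp hb).1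
      simp [he, hai, hbi]
  rw [Finset.prod_congr rfl h2, Finset.prod_mul_distrib, h1, ← Finset.prod_filter]
  have h3 : (Finset.univ.erase i).filter (fun a => a < i)
      = Finset.univ.filter (fun a => a < i) := by
    ext a; simp only [Finset.mem_filter, Finset.mem_erase, Finset.mem_univ, true_and, and_true]
    exact ⟨fun h => h.2, fun h => ⟨ne_of_lt h, h⟩⟩
  rw [h3]
  have h4 : ∏ a ∈ Finset.univ.filter (fun a => a < i), (Polynomial.C (z a) - Polynomial.X)
      = Polynomial.C ((-1:ℝ)^(Finset.univ.filter (fun a : Fin N => a < i)).card) *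
        ∏ a ∈ Finset.univ.filter (fun a => a < i), (Polynomial.X - Polynomial.C (z a)) := by
    rw [map_pow, ← Finset.prod_const, ← Finset.prod_mul_distrib]
    exact Finset.prod_congr rfl fun a _ => by rw [map_neg, map_one]; ring
  have h5 : Finset.univ.erase i
      = (Finset.univ.filter (fun a : Fin N => a < i))
        ∪ (Finset.univ.filter (fun j => i < j)) := by
    ext a
    simp only [Finset.mem_erase, Finset.mem_univ, and_true, true_and, Finset.mem_union,
      Finset.mem_filter]
    constructor
    · intro h; exact lt_or_gt_of_ne h
    · rintro (h | h); exacts [ne_of_lt h, ne_of_gt h]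
  have hdisj : Disjoint (Finset.univ.filter (fun a : Fin N => a < i))
      (Finset.univ.filter (fun j => i < j)) := by
    rw [Finset.disjoint_filter]
    intro a _ ha1 ha2; exact absurd (lt_trans ha1 ha2) (lt_irrefl a)
  refine ⟨((-1:ℝ)^(Finset.univ.filter (fun a : Fin N => a < i)).card) *
    ∏ a ∈ (Finset.univ.erase i), ∏ b ∈ ((Finset.univ.filter (fun j => a < j)).erase i),
      (z a - z b), ?_⟩
  rw [h5, h4]
  simp only [map_mul, map_prod, Finset.prod_union hdisj]
  ring

end Bridge

/-- `Δ⁻¹ ∑_i (1/(p - z_i)) ∂ⁿΔ/∂z_iⁿ = (1/(n+1)) (∂/∂p + ∑_i 1/(p - z_i))^{n+1} · 1`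
for `1 ≤ n < N`, pairwise distinct `z_i`, and `p` distinct from all `z_i`. -/
theorem itoyama_matsuo_formula (N n : ℕ) (hn : 1 ≤ n) (hnN : n < N)
    (z : Fin N → ℝ) (hz : Function.Injective z) (p : ℝ) (hp : ∀ i, p ≠ z i) :
    (eval z (vandPoly N))⁻¹ *
        ∑ i : Fin N, (1 / (p - z i)) * eval z ((pderiv i)^[n] (vandPoly N)) =
      (1 / (n + 1 : ℝ)) * Qiter (fun q => ∑ i : Fin N, 1 / (q - z i)) (n + 1) p := by
  classical
  -- notation
  set f : ℝ → ℝ := fun q => ∑ i : Fin N, 1 / (q - z i) with hf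
  -- the Vandermonde evaluation is nonzero
  have hΔ : eval z (vandPoly N) ≠ 0 := by
    rw [vandPoly, map_prod]
    refine Finset.prod_ne_zero_iff.mpr fun a _ => ?_
    rw [map_prod]
    refine Finset.prod_ne_zero_iff.mpr fun b hb => ?_
    have hab : a ≠ b := ne_of_lt (Finset.mem_filter.mp hb).2
    simpa using sub_ne_zero.mpr (fun h => hab (hz h))
  -- choose constants c i with psi z i Δ = C (c i) * gz z i
  choose c hc using fun i => psi_vand z i
  have hgzv : ∀ i, (gz z i).eval (z i) ≠ 0 := by
    intro i
    rw [gz, Polynomial.eval_prod]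
    refine Finset.prod_ne_zero_iff.mpr fun j hj => ?_
    simpa using sub_ne_zero.mpr (fun h => (Finset.mem_erase.mp hj).1 (hz h.symm))
  have hci : ∀ i, eval z (vandPoly N) = c i * (gz z i).eval (z i) := by
    intro i
    rw [← psi_eval z i, hc i, Polynomial.eval_mul, Polynomial.eval_C]
  -- evaluation of iterated pderiv
  have hder : ∀ i, eval z ((pderiv i)^[n] (vandPoly N))
      = c i * (Polynomial.derivative^[n] (gz z i)).eval (z i) := by
    intro i
    rw [← psi_eval z i, psi_pderiv_iter, hc i, Polynomial.iterate_derivative_C_mul,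
      Polynomial.eval_mul, Polynomial.eval_C]
  -- LHS as a sum
  have hLHS : (eval z (vandPoly N))⁻¹ *
      ∑ i : Fin N, (1 / (p - z i)) * eval z ((pderiv i)^[n] (vandPoly N))
      = ∑ i : Fin N, (Polynomial.derivative^[n] (gz z i)).eval (z i)
          / (gz z i).eval (z i) * (1 / (p - z i)) := by
    rw [Finset.mul_sum]
    refine Finset.sum_congr rfl fun i _ => ?_
    rw [hder i, hci i]
    have h1 : c i ≠ 0 := by
      intro h; exact hΔ (by rw [hci i, h, zero_mul])
    have hpzi : p - z i ≠ 0 := sub_ne_zero.mpr (hp i)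
    field_simp [h1, hgzv i, hpzi]
  -- degree bound for the (n+1)-st derivative of W
  have hdeg : (Polynomial.derivative^[n+1] (Wz z)).degree < (N : WithBot ℕ) := by
    have h1 : (Polynomial.derivative^[n+1] (Wz z)).natDegree ≤ N - (n+1) := by
      have := Polynomial.natDegree_iterate_derivative (Wz z) (n+1)
      rwa [natDegree_Wz] at this
    have h2 : (Polynomial.derivative^[n+1] (Wz z)).natDegree < N :=
      lt_of_le_of_lt h1 (by omega)
    exact lt_of_le_of_lt (Polynomial.degree_le_natDegree) (by exact_mod_cast h2)
  -- value of the (n+1)-st derivative of W at the nodes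
  have hval : ∀ i, (Polynomial.derivative^[n+1] (Wz z)).eval (z i)
      = ((n : ℝ) + 1) * (Polynomial.derivative^[n] (gz z i)).eval (z i) := by
    intro i
    rw [Wz_factor z i, iter_deriv_linear_mul]
    simp
  -- put it together
  rw [hLHS, qiter_eq z (n+1) hp, partial_fractions z hz _ hdeg hp, Finset.mul_sum]
  refine Finset.sum_congr rfl fun i _ => ?_
  rw [hval i]
  have hn1 : ((n : ℝ) + 1) ≠ 0 := by positivity
  field_simp
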